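/- Let (A, m) be a local ring which is separated (i.e. the intersection of all powers of m is zero), and let q(t) = t^d + q_{d-1} t^{d-1} + ... + q_0 be a Weierstrass polynomial of degree d (i.e. all q_i lie in m). If p(t) ∈ A[t] is a polynomial such that p(t) = q(t)·u(t) for some power series u(t) ∈ A[[t]], then u(t) is a polynomial, i.e. q·A[[t]] ∩ A[t] = q·A[t]. -/

import Mathlib

open IsLocalRing Polynomial

/-- A Weierstrass polynomial of degree `d` over a local ring: a monic polynomial of
degree `d` all of whose non-leading coefficients lie in the maximal ideal. -/
def IsWeierstrassPolynomial {A : Type*} [CommRing A] [IsLocalRing A]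
    (q : Polynomial A) (d : ℕ) : Prop :=
  q.Monic ∧ q.natDegree = d ∧ ∀ i < d, q.coeff i ∈ maximalIdeal A

/-- If `(A, m)` is a separated local ring and `q` a Weierstrass polynomial of degree `d`,
then `q·A[[t]] ∩ A[t] = q·A[t]`: any polynomial `p` which factors as `p = q·u` with `u` a
power series has `u` a polynomial. -/
theorem weierstrass_mul_powerSeries_polynomial {A : Type*} [CommRing A] [IsLocalRing A]
    (hsep : (⨅ n : ℕ, (maximalIdeal A) ^ n) = ⊥)
    {d : ℕ} {q : Polynomial A} (hq : IsWeierstrassPolynomial q d)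
    (p : Polynomial A) (u : PowerSeries A)
    (h : (p : PowerSeries A) = (q : PowerSeries A) * u) :
    ∃ v : Polynomial A, u = (v : PowerSeries A) ∧ p = q * v := by
  obtain ⟨hmon, hdeg, hcoef⟩ := hq
  have key : ∀ k n, p.natDegree < n + d →
      (PowerSeries.coeff n) u ∈ maximalIdeal A ^ k := by
    intro k
    induction k with
    | zero => intro n _; simp
    | succ k ih =>
      intro n hn
      have h0 : PowerSeries.coeff (n + d) ((q : PowerSeries A) * u) = 0 := by
        rw [← h, Polynomial.coeff_coe]
        exact Polynomial.coeff_eq_zero_of_natDegree_lt hn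
      rw [PowerSeries.coeff_mul] at h0
      have hmem : (d, n) ∈ Finset.HasAntidiagonal.antidiagonal (n + d) := by
        simp [Nat.add_comm]
      rw [← Finset.add_sum_erase _ _ hmem] at h0
      have hqd : PowerSeries.coeff d (q : PowerSeries A) = 1 := by
        rw [Polynomial.coeff_coe, ← hdeg]
        exact hmon
      rw [hqd, one_mul] at h0
      have hsum : ∑ x ∈ (Finset.HasAntidiagonal.antidiagonal (n + d)).erase (d, n),
          PowerSeries.coeff x.1 (q : PowerSeries A) * PowerSeries.coeff x.2 u ∈
          maximalIdeal A ^ (k + 1) := by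
        apply Ideal.sum_mem
        intro x hx
        obtain ⟨hne, hanti⟩ := Finset.mem_erase.mp hx
        rw [Finset.HasAntidiagonal.mem_antidiagonal] at hanti
        rcases lt_trichotomy x.1 d with h1 | h1 | h1
        · have hx2 : n < x.2 := by omega
          rw [Polynomial.coeff_coe]
          rw [pow_succ']
          exact Ideal.mul_mem_mul (hcoef x.1 h1) (ih x.2 (by omega))
        · exfalso
          apply hne
          have : x.2 = n := by omega
          exact Prod.ext h1 this
        · rw [Polynomial.coeff_coe, Polynomial.coeff_eq_zero_of_natDegree_lt (by omega),
            zero_mul]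
          exact zero_mem _
      have : PowerSeries.coeff n u = -∑ x ∈ (Finset.HasAntidiagonal.antidiagonal (n + d)).erase (d, n),
          PowerSeries.coeff x.1 (q : PowerSeries A) * PowerSeries.coeff x.2 u :=
        eq_neg_of_add_eq_zero_left h0
      rw [this]
      exact neg_mem hsum
  have hzero : ∀ n, p.natDegree < n + d → PowerSeries.coeff n u = 0 := by
    intro n hn
    have : PowerSeries.coeff n u ∈ ⨅ k : ℕ, (maximalIdeal A) ^ k :=
      Ideal.mem_iInf.mpr fun k => key k n hn
    rw [hsep] at this
    exact this
  refine ⟨u.trunc (p.natDegree + 1), ?_, ?_⟩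
  · ext n
    rw [Polynomial.coeff_coe, PowerSeries.coeff_trunc]
    split
    · rfl
    · exact hzero n (by omega)
  · have hv : ((u.trunc (p.natDegree + 1) : Polynomial A) : PowerSeries A) = u := by
      ext n
      rw [Polynomial.coeff_coe, PowerSeries.coeff_trunc]
      split
      · rfl
      · exact (hzero n (by omega)).symm
    apply Polynomial.coe_inj.mp
    rw [Polynomial.coe_mul, hv, h]
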